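/- For t = 1/20 and x = 0.63, with L₃ = diag(1, 5/8, 5/8), the filtered state ρ^f = (L₃⊗I₃) ρ(x,t) (L₃⊗I₃)† satisfies: (φ⊗I_3)(ρ^f) has a negative eigenvalue. Hence the local filter makes the entanglement of ρ(x,t) detectable by the Choi map φ. -/

import Mathlib

set_option maxHeartbeats 2000000


open Matrix
open scoped Kronecker ComplexOrder


/-- Diagonal entries of the unnormalized state: in the paper's ordering
`(1+t, t, 1/t, 1/t, 1+t, t, 1, 1/t, 1)`. -/
noncomputable def diagEntry (t : ℝ) : Fin 3 × Fin 3 → ℝ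
  | (0, 0) => 1 + t
  | (0, 1) => t
  | (0, 2) => 1 / t
  | (1, 0) => 1 / t
  | (1, 1) => 1 + t
  | (1, 2) => t
  | (2, 0) => 1
  | (2, 1) => 1 / t
  | (2, 2) => 1

/-- The (upper) positions carrying the entry `x`, i.e. (1,5),(1,9),(5,9),(2,4),(3,7),(6,8)
in the 1-indexed `9 × 9` labelling with index `(i,k) ↦ 3i + k + 1`. -/
def xPos (p q : Fin 3 × Fin 3) : Prop :=
  (p = (0, 0) ∧ q = (1, 1)) ∨ (p = (0, 0) ∧ q = (2, 2)) ∨ (p = (1, 1) ∧ q = (2, 2)) ∨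
  (p = (0, 1) ∧ q = (1, 0)) ∨ (p = (0, 2) ∧ q = (2, 0)) ∨ (p = (1, 2) ∧ q = (2, 1))

instance : DecidableRel xPos := fun p q => by unfold xPos; infer_instance

/-- The two-parameter state `ρ(x,t)` of the paper, with normalization
`K = 1/(4 + 3/t + 4t)`. -/
noncomputable def rhoXT (x t : ℝ) : Matrix (Fin 3 × Fin 3) (Fin 3 × Fin 3) ℂ :=
  Matrix.of fun p q =>
    ((1 / (4 + 3 / t + 4 * t) : ℝ) : ℂ) *
      (if p = q then ((diagEntry t p : ℝ) : ℂ)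
       else if xPos p q ∨ xPos q p then (x : ℂ) else 0)

/-- The Choi map `φ` on 3×3 complex matrices. -/
noncomputable def choiPhi (a : Matrix (Fin 3) (Fin 3) ℂ) : Matrix (Fin 3) (Fin 3) ℂ :=
  (1 / 2 : ℂ) •
    !![a 0 0 + a 2 2, -a 0 1, -a 0 2;
       -a 1 0, a 1 1 + a 0 0, -a 1 2;
       -a 2 0, -a 2 1, a 2 2 + a 1 1]

/-- `φ ⊗ id`: apply `φ` to the first tensor factor of an operator on `ℂ^3 ⊗ ℂ^3`. -/
noncomputable def phiFst (ρ : Matrix (Fin 3 × Fin 3) (Fin 3 × Fin 3) ℂ) :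
    Matrix (Fin 3 × Fin 3) (Fin 3 × Fin 3) ℂ :=
  Matrix.of fun p q => choiPhi (Matrix.of fun i j => ρ (i, p.2) (j, q.2)) p.1 q.1

/-- The local filter `L₃ = diag(1, 5/8, 5/8)`. -/
noncomputable def L3 : Matrix (Fin 3) (Fin 3) ℂ :=
  Matrix.diagonal ![1, 5/8, 5/8]

set_option maxHeartbeats 1000000 in
private lemma rhoXT_isHermitian (x t : ℝ) : (rhoXT x t).IsHermitian := by
  rw [Matrix.IsHermitian, ← Matrix.ext_iff]
  intro p q
  simp only [rhoXT, Matrix.conjTranspose_apply, Matrix.of_apply]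
  by_cases h : p = q
  · subst h; simp
  · rw [if_neg h, if_neg fun hh => h hh.symm]
    by_cases h2 : xPos p q ∨ xPos q p
    · rw [if_pos (Or.symm h2), if_pos h2]; simp
    · rw [if_neg (fun hh => h2 (Or.symm hh)), if_neg h2]; simp

private lemma choiPhi_conjTranspose (a : Matrix (Fin 3) (Fin 3) ℂ) :
    choiPhi aᴴ = (choiPhi a)ᴴ := by
  ext i j
  fin_cases i <;> fin_cases j <;>
    simp [choiPhi, Matrix.conjTranspose_apply]

private lemma phiFst_isHermitian {ρ : Matrix (Fin 3 × Fin 3) (Fin 3 × Fin 3) ℂ}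
    (hρ : ρ.IsHermitian) : (phiFst ρ).IsHermitian := by
  rw [Matrix.IsHermitian, ← Matrix.ext_iff]
  intro p q
  have key : (Matrix.of fun i j => ρ (i, p.2) (j, q.2)) =
      (Matrix.of fun i j => ρ (i, q.2) (j, p.2))ᴴ := by
    ext i j
    simp only [Matrix.conjTranspose_apply, Matrix.of_apply]
    exact (congrFun (congrFun hρ.symm (i, p.2)) (j, q.2)).symm ▸
      (Matrix.conjTranspose_apply _ _ _)
  calc (phiFst ρ)ᴴ p q
      = (starRingEnd ℂ) (choiPhi (Matrix.of fun i j => ρ (i, q.2) (j, p.2)) q.1 p.1) := rfl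
    _ = (choiPhi (Matrix.of fun i j => ρ (i, q.2) (j, p.2)))ᴴ p.1 q.1 := rfl
    _ = choiPhi (Matrix.of fun i j => ρ (i, q.2) (j, p.2))ᴴ p.1 q.1 := by
        rw [choiPhi_conjTranspose]
    _ = phiFst ρ p q := by rw [← key]; rfl

private lemma L3_kron : (L3 ⊗ₖ (1 : Matrix (Fin 3) (Fin 3) ℂ)) =
    Matrix.diagonal (fun p : Fin 3 × Fin 3 => (![1, 5/8, 5/8] : Fin 3 → ℂ) p.1) := by
  rw [L3, show (1 : Matrix (Fin 3) (Fin 3) ℂ) = Matrix.diagonal (fun _ => 1) by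
    simp [Matrix.diagonal_one], Matrix.diagonal_kronecker_diagonal]
  simp

private lemma Mval00 :
    phiFst ((L3 ⊗ₖ (1 : Matrix (Fin 3) (Fin 3) ℂ)) * rhoXT 0.63 20⁻¹ *
      (L3 ⊗ₖ (1 : Matrix (Fin 3) (Fin 3) ℂ))ᴴ) (0 : Fin 3 × Fin 3) (0 : Fin 3 × Fin 3) = 461/41088 := by
  rw [L3_kron]
  simp [phiFst, choiPhi, rhoXT, xPos, diagEntry, Matrix.diagonal_conjTranspose,
    Matrix.diagonal_mul, Matrix.mul_diagonal, Matrix.diagonal_apply]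
  norm_num [Complex.ext_iff, map_ofNat, Complex.div_re, Complex.div_im,
    Complex.normSq_apply]

private lemma Mval01 :
    phiFst ((L3 ⊗ₖ (1 : Matrix (Fin 3) (Fin 3) ℂ)) * rhoXT 0.63 20⁻¹ *
      (L3 ⊗ₖ (1 : Matrix (Fin 3) (Fin 3) ℂ))ᴴ) (0 : Fin 3 × Fin 3) (1 : Fin 3 × Fin 3) = -21/6848 := by
  rw [L3_kron]
  simp [phiFst, choiPhi, rhoXT, xPos, diagEntry, Matrix.diagonal_conjTranspose,
    Matrix.diagonal_mul, Matrix.mul_diagonal, Matrix.diagonal_apply]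
  norm_num [Complex.ext_iff, map_ofNat, Complex.div_re, Complex.div_im,
    Complex.normSq_apply]

private lemma Mval02 :
    phiFst ((L3 ⊗ₖ (1 : Matrix (Fin 3) (Fin 3) ℂ)) * rhoXT 0.63 20⁻¹ *
      (L3 ⊗ₖ (1 : Matrix (Fin 3) (Fin 3) ℂ))ᴴ) (0 : Fin 3 × Fin 3) (((2 : Fin 3), (2 : Fin 3)) : Fin 3 × Fin 3) = -21/6848 := by
  rw [L3_kron]
  simp [phiFst, choiPhi, rhoXT, xPos, diagEntry, Matrix.diagonal_conjTranspose,
    Matrix.diagonal_mul, Matrix.mul_diagonal, Matrix.diagonal_apply]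
  norm_num [Complex.ext_iff, map_ofNat, Complex.div_re, Complex.div_im,
    Complex.normSq_apply]

private lemma Mval10 :
    phiFst ((L3 ⊗ₖ (1 : Matrix (Fin 3) (Fin 3) ℂ)) * rhoXT 0.63 20⁻¹ *
      (L3 ⊗ₖ (1 : Matrix (Fin 3) (Fin 3) ℂ))ᴴ) (1 : Fin 3 × Fin 3) (0 : Fin 3 × Fin 3) = -21/6848 := by
  rw [L3_kron]
  simp [phiFst, choiPhi, rhoXT, xPos, diagEntry, Matrix.diagonal_conjTranspose,
    Matrix.diagonal_mul, Matrix.mul_diagonal, Matrix.diagonal_apply]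
  norm_num [Complex.ext_iff, map_ofNat, Complex.div_re, Complex.div_im,
    Complex.normSq_apply]

private lemma Mval11 :
    phiFst ((L3 ⊗ₖ (1 : Matrix (Fin 3) (Fin 3) ℂ)) * rhoXT 0.63 20⁻¹ *
      (L3 ⊗ₖ (1 : Matrix (Fin 3) (Fin 3) ℂ))ᴴ) (1 : Fin 3 × Fin 3) (1 : Fin 3 × Fin 3) = 589/164352 := by
  rw [L3_kron]
  simp [phiFst, choiPhi, rhoXT, xPos, diagEntry, Matrix.diagonal_conjTranspose,
    Matrix.diagonal_mul, Matrix.mul_diagonal, Matrix.diagonal_apply]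
  norm_num [Complex.ext_iff, map_ofNat, Complex.div_re, Complex.div_im,
    Complex.normSq_apply]

private lemma Mval12 :
    phiFst ((L3 ⊗ₖ (1 : Matrix (Fin 3) (Fin 3) ℂ)) * rhoXT 0.63 20⁻¹ *
      (L3 ⊗ₖ (1 : Matrix (Fin 3) (Fin 3) ℂ))ᴴ) (1 : Fin 3 × Fin 3) (((2 : Fin 3), (2 : Fin 3)) : Fin 3 × Fin 3) = -105/54784 := by
  rw [L3_kron]
  simp [phiFst, choiPhi, rhoXT, xPos, diagEntry, Matrix.diagonal_conjTranspose,
    Matrix.diagonal_mul, Matrix.mul_diagonal, Matrix.diagonal_apply]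
  norm_num [Complex.ext_iff, map_ofNat, Complex.div_re, Complex.div_im,
    Complex.normSq_apply]

private lemma Mval20 :
    phiFst ((L3 ⊗ₖ (1 : Matrix (Fin 3) (Fin 3) ℂ)) * rhoXT 0.63 20⁻¹ *
      (L3 ⊗ₖ (1 : Matrix (Fin 3) (Fin 3) ℂ))ᴴ) (((2 : Fin 3), (2 : Fin 3)) : Fin 3 × Fin 3) (0 : Fin 3 × Fin 3) = -21/6848 := by
  rw [L3_kron]
  simp [phiFst, choiPhi, rhoXT, xPos, diagEntry, Matrix.diagonal_conjTranspose,
    Matrix.diagonal_mul, Matrix.mul_diagonal, Matrix.diagonal_apply]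
  norm_num [Complex.ext_iff, map_ofNat, Complex.div_re, Complex.div_im,
    Complex.normSq_apply]

private lemma Mval21 :
    phiFst ((L3 ⊗ₖ (1 : Matrix (Fin 3) (Fin 3) ℂ)) * rhoXT 0.63 20⁻¹ *
      (L3 ⊗ₖ (1 : Matrix (Fin 3) (Fin 3) ℂ))ᴴ) (((2 : Fin 3), (2 : Fin 3)) : Fin 3 × Fin 3) (1 : Fin 3 × Fin 3) = -105/54784 := by
  rw [L3_kron]
  simp [phiFst, choiPhi, rhoXT, xPos, diagEntry, Matrix.diagonal_conjTranspose,
    Matrix.diagonal_mul, Matrix.mul_diagonal, Matrix.diagonal_apply]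
  norm_num [Complex.ext_iff, map_ofNat, Complex.div_re, Complex.div_im,
    Complex.normSq_apply]

private lemma Mval22 :
    phiFst ((L3 ⊗ₖ (1 : Matrix (Fin 3) (Fin 3) ℂ)) * rhoXT 0.63 20⁻¹ *
      (L3 ⊗ₖ (1 : Matrix (Fin 3) (Fin 3) ℂ))ᴴ) (((2 : Fin 3), (2 : Fin 3)) : Fin 3 × Fin 3) (((2 : Fin 3), (2 : Fin 3)) : Fin 3 × Fin 3) = 175/54784 := by
  rw [L3_kron]
  simp [phiFst, choiPhi, rhoXT, xPos, diagEntry, Matrix.diagonal_conjTranspose,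
    Matrix.diagonal_mul, Matrix.mul_diagonal, Matrix.diagonal_apply]
  norm_num [Complex.ext_iff, map_ofNat, Complex.div_re, Complex.div_im,
    Complex.normSq_apply]

/-- for `t = 1/20` and `x = 0.63`, the filtered state
`ρᶠ = (L₃ ⊗ I₃) ρ(x,t) (L₃ ⊗ I₃)†` satisfies: `(φ ⊗ I₃)(ρᶠ)` has a negative
eigenvalue, so the local filter makes the entanglement detectable by `φ`. -/
theorem filtered_rhoXT_detected :
    ∃ (h : (phiFst ((L3 ⊗ₖ (1 : Matrix (Fin 3) (Fin 3) ℂ)) * rhoXT 0.63 (1/20) *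
        (L3 ⊗ₖ (1 : Matrix (Fin 3) (Fin 3) ℂ))ᴴ)).IsHermitian) (i : Fin 3 × Fin 3),
      h.eigenvalues i < 0 := by
  have hM : (phiFst ((L3 ⊗ₖ (1 : Matrix (Fin 3) (Fin 3) ℂ)) * rhoXT 0.63 (1/20) *
      (L3 ⊗ₖ (1 : Matrix (Fin 3) (Fin 3) ℂ))ᴴ)).IsHermitian :=
    phiFst_isHermitian (Matrix.isHermitian_mul_mul_conjTranspose _
      (rhoXT_isHermitian 0.63 (1/20)))
  refine ⟨hM, ?_⟩
  by_contra hc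
  push_neg at hc
  have hpsd := hM.posSemidef_iff_eigenvalues_nonneg.mpr (fun i => hc i)
  set v : Fin 3 × Fin 3 → ℂ := fun p =>
    if p = (0, 0) then 71/200 else if p = (1, 1) then 637/1000 else
    if p = (2, 2) then 171/250 else 0 with hv
  have h2 := hpsd.dotProduct_mulVec_nonneg v
  simp [dotProduct, Matrix.mulVec, Fintype.sum_prod_type,
    Fin.sum_univ_succ, Fin.sum_univ_zero, hv, Prod.mk.injEq, Complex.le_def] at h2
  simp only [Prod.mk_zero_zero, Prod.mk_one_one, Mval00, Mval01, Mval02, Mval10, Mval11, Mval12, Mval20, Mval21, Mval22] at h2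
  norm_num [Complex.div_re, Complex.div_im, Complex.normSq_apply, map_ofNat] at h2
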